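/- The sequence m_{n−i}^{1/2} = α√2·(n(n+1)⋯(n+i−1)/((n−1)(n−2)⋯(n−i)))^{1/2} for i = 1,…,n−1 satisfies the three-term recurrence m_{i−1}^{1/2} = (2n·m_i^{1/2} − √(i(2n−i−1))·m_{i+1}^{1/2})/√((i−1)(2n−i)) arising from the interior equations of B(n)u = (k_1 m_1^{−1/2}, 0, …, 0)ᵀ with m_n^{1/2} = α. -/
import Mathlib


/-- The square roots of the masses:
`m_{n-i}^{1/2} = α√2 (n(n+1)⋯(n+i-1) / ((n-1)(n-2)⋯(n-i)))^{1/2}`, i.e. in terms of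
`j = n - i`, `m_j^{1/2} = α√2 √((2n-j-1)! (j-1)! / ((n-1)!)²)` for `j < n`, and
`m_n^{1/2} = α`. -/
noncomputable def massSqrt (n : ℕ) (α : ℝ) (j : ℕ) : ℝ :=
  if j = n then α
  else α * Real.sqrt 2 *
    Real.sqrt ((Nat.factorial (2 * n - j - 1)) * (Nat.factorial (j - 1))
      / ((Nat.factorial (n - 1)) : ℝ) ^ 2)

lemma aux_sqrt_rec (α x y t : ℝ) (hx : 2 ≤ x) (hy : x + 2 ≤ y) (ht : 0 ≤ t) :
    α * Real.sqrt 2 * Real.sqrt (y * ((y - 1) * t)) =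
      ((x + y) * (α * Real.sqrt 2 * Real.sqrt ((y - 1) * ((x - 1) * t)))
        - Real.sqrt (x * (y - 1)) * (α * Real.sqrt 2 * Real.sqrt (x * ((x - 1) * t)))) /
        Real.sqrt ((x - 1) * y) := by
  have hx0 : (0:ℝ) ≤ x := by linarith
  have h1 : (0:ℝ) ≤ x - 1 := by linarith
  have hy0 : (0:ℝ) ≤ y := by linarith
  have hy1 : (0:ℝ) ≤ y - 1 := by linarith
  rw [Real.sqrt_mul hy0, Real.sqrt_mul hy1, Real.sqrt_mul hy1, Real.sqrt_mul h1,
      Real.sqrt_mul hx0 (y-1), Real.sqrt_mul hx0 ((x-1)*t), Real.sqrt_mul h1,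
      Real.sqrt_mul h1 y]
  have hxx : Real.sqrt x * Real.sqrt x = x := Real.mul_self_sqrt hx0
  have hyy : Real.sqrt y * Real.sqrt y = y := Real.mul_self_sqrt hy0
  rw [eq_div_iff (mul_pos (Real.sqrt_pos.2 (by linarith : (0:ℝ) < x - 1))
    (Real.sqrt_pos.2 (by linarith : (0:ℝ) < y))).ne']
  linear_combination (α * Real.sqrt 2 * Real.sqrt (y-1) * Real.sqrt t * Real.sqrt (x-1)) * hyy
    + (α * Real.sqrt 2 * Real.sqrt (y-1) * Real.sqrt (x-1) * Real.sqrt t) * hxx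


/-- The interior equations of `B(n)u = (k₁m₁^{-1/2}, 0, …, 0)ᵀ` give the three-term
recurrence `m_{i-1}^{1/2} = (2n m_i^{1/2} - √(i(2n-i-1)) m_{i+1}^{1/2}) / √((i-1)(2n-i))`
for `i = 2, …, n-2`, which the closed-form sequence satisfies. -/
theorem stmt_18 (n : ℕ) (hn : 3 ≤ n) (α : ℝ) (hα : 0 < α) :
    ∀ i : ℕ, 2 ≤ i → i ≤ n - 2 →
      massSqrt n α (i - 1) =
        (2 * (n : ℝ) * massSqrt n α i
            - Real.sqrt (i * (2 * n - i - 1)) * massSqrt n α (i + 1))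
          / Real.sqrt ((i - 1) * (2 * n - i)) := by
  intro i h2 hin
  have hni : i + 2 ≤ n := by omega
  rw [massSqrt, massSqrt, massSqrt, if_neg (by omega : i - 1 ≠ n),
    if_neg (by omega : i ≠ n), if_neg (by omega : i + 1 ≠ n)]
  have e1 : 2*n - (i-1) - 1 = 2*n - i := by omega
  have e2 : i - 1 - 1 = i - 2 := by omega
  have e3 : 2*n - (i+1) - 1 = 2*n - i - 2 := by omega
  have e4 : i + 1 - 1 = i := by omega
  rw [e1, e2, e3, e4]
  have key : ∀ m : ℕ, 1 ≤ m → m.factorial = m * (m-1).factorial := by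
    intro m hm
    obtain ⟨k, rfl⟩ : ∃ k, m = k + 1 := ⟨m-1, by omega⟩
    simp [Nat.factorial_succ]
  rw [key (2*n-i) (by omega), key (2*n-i-1) (by omega), key i (by omega),
    key (i-1) (by omega), show 2*n-i-1-1 = 2*n-i-2 from by omega, e2]
  push_cast
  have cs1 : ((2*n - i : ℕ):ℝ) = 2*(n:ℝ) - (i:ℝ) := by
    have h := congrArg (Nat.cast : ℕ → ℝ) (show (2*n - i) + i = 2*n from by omega)
    push_cast at h; linarith
  have cs2 : ((2*n - i - 1 : ℕ):ℝ) = 2*(n:ℝ) - (i:ℝ) - 1 := by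
    have h := congrArg (Nat.cast : ℕ → ℝ) (show (2*n - i - 1) + (i+1) = 2*n from by omega)
    push_cast at h; linarith
  have cs3 : ((i - 1 : ℕ):ℝ) = (i:ℝ) - 1 := by
    have h := congrArg (Nat.cast : ℕ → ℝ) (show (i - 1) + 1 = i from by omega)
    push_cast at h; linarith
  rw [cs1, cs2, cs3]
  set P : ℝ := ((2*n - i - 2).factorial : ℝ) with hP
  set Q : ℝ := ((i - 2).factorial : ℝ) with hQ
  set c : ℝ := ((n - 1).factorial : ℝ)^2 with hc
  set t : ℝ := P * Q / c with hT
  have ht : 0 ≤ t := by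
    apply div_nonneg (mul_nonneg (Nat.cast_nonneg _) (Nat.cast_nonneg _))
    positivity
  have hx : (2:ℝ) ≤ (i:ℝ) := by exact_mod_cast h2
  have hy : (i:ℝ) + 2 ≤ 2*(n:ℝ) - (i:ℝ) := by
    have h := (Nat.cast_le (α := ℝ)).2 (show 2*i + 2 ≤ 2*n from by omega)
    push_cast at h; linarith
  have main := aux_sqrt_rec α (i:ℝ) (2*(n:ℝ)-(i:ℝ)) t hx hy ht
  rw [show (2*(n:ℝ) - (i:ℝ)) * ((2*(n:ℝ) - (i:ℝ) - 1) * P) * Q / c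
      = (2*(n:ℝ)-(i:ℝ)) * ((2*(n:ℝ)-(i:ℝ) - 1) * t) from by rw [hT]; ring,
    show (2*(n:ℝ) - (i:ℝ) - 1) * P * (((i:ℝ) - 1) * Q) / c
      = (2*(n:ℝ)-(i:ℝ) - 1) * (((i:ℝ) - 1) * t) from by rw [hT]; ring,
    show P * ((i:ℝ) * (((i:ℝ) - 1) * Q)) / c
      = (i:ℝ) * (((i:ℝ) - 1) * t) from by rw [hT]; ring]
  convert main using 3
  ring
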